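/- Let A be a random n×n complex matrix on a probability space. For τ > 0, let F(τ) denote the event that A has n distinct eigenvalues λ_1,…,λ_n with max_j κ(λ_j)² ≤ τ. Fix 0 < τ₁ < τ₂ and ε, η₀ > 0 with η₀ ≥ n·ε·√τ₂. Then Pr( F(τ₁) ∧ η(A) ≥ η₀ ) ≥ Pr( F(τ₂) ∧ η(A) ≥ η₀ ) − (4/π)·E[vol Λ_ε(A)] / (ε²·τ₁). -/

import Mathlib

open MeasureTheory Matrix
open scoped ENNReal

noncomputable section

/-- ℓ²→ℓ² operator norm of a complex square matrix. -/
def opNorm {n : ℕ} (A : Matrix (Fin n) (Fin n) ℂ) : ℝ :=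
  ‖(Matrix.toEuclideanCLM (𝕜 := ℂ) A : EuclideanSpace ℂ (Fin n) →L[ℂ] EuclideanSpace ℂ (Fin n))‖

/-- `svAsc A i` : the `i`-th *smallest* singular value of `A` (0-indexed). -/
def svAsc {n : ℕ} (A : Matrix (Fin n) (Fin n) ℂ) (i : Fin n) : ℝ :=
  Real.sqrt ((Matrix.isHermitian_conjTranspose_mul_self A).eigenvalues
    (Tuple.sort ((Matrix.isHermitian_conjTranspose_mul_self A).eigenvalues) i))

/-- `sLow A m` = σ_{n-m}(A), the (m+1)-th smallest singular value. -/
def sLow {n : ℕ} (A : Matrix (Fin n) (Fin n) ℂ) (m : ℕ) : ℝ :=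
  if h : m < n then svAsc A ⟨m, h⟩ else 0

/-- the ε-pseudospectrum of a matrix, as a subset of ℂ. -/
def pspec {n : ℕ} (ε : ℝ) (A : Matrix (Fin n) (Fin n) ℂ) : Set ℂ :=
  {z | sLow (z • (1 : Matrix (Fin n) (Fin n) ℂ) - A) 0 ≤ ε}

open scoped Classical in
/-- minimum gap between eigenvalues (counted with multiplicity). -/
def minGap {n : ℕ} (A : Matrix (Fin n) (Fin n) ℂ) : ℝ :=
  sInf {d | ∃ a ∈ A.charpoly.roots, ∃ b ∈ A.charpoly.roots.erase a, d = ‖a - b‖}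

/-- eigenvector condition number. -/
def kappaV {n : ℕ} (A : Matrix (Fin n) (Fin n) ℂ) : ℝ≥0∞ :=
  ⨅ (V : Matrix (Fin n) (Fin n) ℂ) (D : Matrix (Fin n) (Fin n) ℂ)
    (_ : IsUnit V) (_ : D.IsDiag) (_ : A = V * D * V⁻¹),
    ENNReal.ofReal (opNorm V * opNorm V⁻¹)

/-- spectral radius of a matrix. -/
def spr {n : ℕ} (A : Matrix (Fin n) (Fin n) ℂ) : ℝ :=
  sSup {x : ℝ | ∃ μ ∈ spectrum ℂ A, x = ‖μ‖}

/-- ℓ∞→ℓ∞ operator norm (max absolute row sum). -/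
def infNorm {n : ℕ} (A : Matrix (Fin n) (Fin n) ℂ) : ℝ :=
  ⨆ i, ∑ j, ‖A i j‖

/-- ℓ² norm of a vector in ℂⁿ. -/
def l2norm {n : ℕ} (v : Fin n → ℂ) : ℝ :=
  Real.sqrt (∑ j, ‖v j‖ ^ 2)

/-- standard complex Gaussian measure on ℂ. -/
def gaussianC : Measure ℂ :=
  MeasureTheory.volume.withDensity fun z => ENNReal.ofReal (Real.pi⁻¹ * Real.exp (-(‖z‖ ^ 2)))

/-- law of δ ⬝ g : δ Bernoulli(ρ), g standard complex Gaussian, independent. -/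
def sparseG (ρ : ℝ) : Measure ℂ :=
  ENNReal.ofReal ρ • gaussianC + ENNReal.ofReal (1 - ρ) • Measure.dirac 0

/-- law of a vector with i.i.d. sparse-Gaussian entries. -/
def vecLaw (n : ℕ) (ρ : ℝ) : Measure (Fin n → ℂ) :=
  Measure.pi fun _ => sparseG ρ

instance matrixMeasurableSpace {n : ℕ} : MeasurableSpace (Matrix (Fin n) (Fin n) ℂ) :=
  inferInstanceAs (MeasurableSpace (Fin n → Fin n → ℂ))

/-- law of the random matrix N_g with i.i.d. sparse-Gaussian entries. -/
def matLaw (n : ℕ) (ρ : ℝ) : Measure (Matrix (Fin n) (Fin n) ℂ) :=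
  Measure.pi fun _ : Fin n => vecLaw n ρ

/-- Lévy concentration p(v,r) of ⟨ĝ ⊙ δ̂, v⟩. -/
def pconc (n : ℕ) (ρ : ℝ) (v : Fin n → ℂ) (r : ℝ) : ℝ≥0∞ :=
  ⨆ z : ℂ, vecLaw n ρ {x | ‖(∑ j, x j * (starRingEnd ℂ) (v j)) - z‖ ≤ r}

/-- incompressible unit vectors. -/
def Incomp (n : ℕ) (ρ : ℝ) (r s : ℝ) : Set (Fin n → ℂ) :=
  {v | l2norm v = 1 ∧ pconc n ρ v r ≤ ENNReal.ofReal s}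

/-- compressible unit vectors. -/
def Comp (n : ℕ) (ρ : ℝ) (r s : ℝ) : Set (Fin n → ℂ) :=
  {v | l2norm v = 1 ∧ ENNReal.ofReal s ≤ pconc n ρ v r}

/-- eigenvalue condition number κ(λ_j) read off from a diagonalizing matrix V:
    (norm of j-th column of V) times (norm of j-th row of V⁻¹). -/
def evCond {n : ℕ} (V : Matrix (Fin n) (Fin n) ℂ) (j : Fin n) : ℝ :=
  l2norm (fun i => V i j) * l2norm (fun i => V⁻¹ j i)

/-- the event that `B` has `n` distinct eigenvalues with all squared
    eigenvalue condition numbers at most τ. -/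
def distinctCondEvent {n : ℕ} (τ : ℝ) (B : Matrix (Fin n) (Fin n) ℂ) : Prop :=
  ∃ (V : Matrix (Fin n) (Fin n) ℂ) (lam : Fin n → ℂ), Function.Injective lam ∧ IsUnit V ∧
    B = V * Matrix.diagonal lam * V⁻¹ ∧ ∀ j, (evCond V j) ^ 2 ≤ τ

section Helpers
open Polynomial
open scoped ComplexOrder
variable {n : ℕ}

lemma charpoly_conj_diag (V : Matrix (Fin n) (Fin n) ℂ) (lam : Fin n → ℂ) (hV : IsUnit V) :
    (V * Matrix.diagonal lam * V⁻¹).charpoly = (Matrix.diagonal lam).charpoly := by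
  have hdet : IsUnit V.det := (Matrix.isUnit_iff_isUnit_det V).mp hV
  have h1 : V * V⁻¹ = 1 := Matrix.mul_nonsing_inv V hdet
  have h2 : V⁻¹ * V = 1 := Matrix.nonsing_inv_mul V hdet
  unfold Matrix.charpoly
  have hc : charmatrix (V * Matrix.diagonal lam * V⁻¹)
      = (V.map C) * charmatrix (Matrix.diagonal lam) * (V⁻¹.map C) := by
    simp only [charmatrix, RingHom.mapMatrix_apply]
    rw [Matrix.mul_sub, Matrix.sub_mul]
    congr 1
    · rw [mul_assoc]
      rw [(Matrix.scalar_commute (X : ℂ[X]) (fun r => Commute.all _ r) _).eq]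
      rw [← mul_assoc, ← Matrix.map_mul, h1, Matrix.map_one C (map_zero C) (map_one C), one_mul]
    · rw [← Matrix.map_mul, ← Matrix.map_mul]
  rw [hc, Matrix.det_mul, Matrix.det_mul, mul_comm, ← mul_assoc, ← Matrix.det_mul, ← Matrix.map_mul,
    h2, Matrix.map_one C (map_zero C) (map_one C), Matrix.det_one, one_mul]

lemma roots_charpoly_diag (lam : Fin n → ℂ) :
    (Matrix.diagonal lam).charpoly.roots = Multiset.map lam Finset.univ.val := by
  have hc : charmatrix (Matrix.diagonal lam) = Matrix.diagonal (fun i => (X : ℂ[X]) - C (lam i)) := by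
    apply Matrix.ext; intro i j
    by_cases h : i = j
    · subst h; simp [charmatrix_apply_eq]
    · rw [charmatrix_apply_ne _ _ _ h]; rw [Matrix.diagonal_apply_ne _ h, Matrix.diagonal_apply_ne _ h, map_zero, neg_zero]
  rw [Matrix.charpoly, hc, Matrix.det_diagonal]
  have : ∏ i, ((X : ℂ[X]) - C (lam i)) =
      ((Multiset.map lam Finset.univ.val).map (fun a => (X : ℂ[X]) - C a)).prod := by
    rw [Multiset.map_map]; rfl
  rw [this, Polynomial.roots_multiset_prod_X_sub_C]

def E2 : (Fin n → ℂ) ≃ₗ[ℂ] EuclideanSpace ℂ (Fin n) := (WithLp.linearEquiv 2 ℂ _).symm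

lemma l2norm_eq_norm (v : Fin n → ℂ) : l2norm v = ‖E2 v‖ := by
  rw [EuclideanSpace.norm_eq]
  simp only []
  rfl

lemma l2norm_add_le (a b : Fin n → ℂ) : l2norm (a + b) ≤ l2norm a + l2norm b := by
  rw [l2norm_eq_norm, l2norm_eq_norm, l2norm_eq_norm, map_add]
  exact norm_add_le _ _

lemma l2norm_smul (c : ℂ) (v : Fin n → ℂ) : l2norm (c • v) = ‖c‖ * l2norm v := by
  rw [l2norm_eq_norm, l2norm_eq_norm, LinearEquiv.map_smul, norm_smul]

lemma l2norm_sum_le {ι : Type*} (s : Finset ι) (f : ι → (Fin n → ℂ)) :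
    l2norm (∑ i ∈ s, f i) ≤ ∑ i ∈ s, l2norm (f i) := by
  rw [l2norm_eq_norm, map_sum]
  refine (norm_sum_le _ _).trans ?_
  refine le_of_eq (Finset.sum_congr rfl fun i _ => ?_)
  rw [← l2norm_eq_norm]

lemma abs_dot_le (a b : Fin n → ℂ) :
    ‖dotProduct a b‖ ≤ l2norm a * l2norm b := by
  have h : dotProduct a b = inner (𝕜 := ℂ) (E2 (star a)) (E2 b) := by
    rw [EuclideanSpace.inner_eq_star_dotProduct]
    simp [dotProduct, E2, mul_comm]
  rw [h]
  refine (norm_inner_le_norm _ _).trans ?_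
  rw [← l2norm_eq_norm, ← l2norm_eq_norm]
  have : l2norm (star a) = l2norm a := by
    unfold l2norm
    congr 1
    exact Finset.sum_congr rfl fun j _ => by simp
  rw [this]

def frob {n : ℕ} (B : Matrix (Fin n) (Fin n) ℂ) : ℝ :=
  Real.sqrt (∑ i, ∑ j, ‖B i j‖ ^ 2)

lemma frob_nonneg (B : Matrix (Fin n) (Fin n) ℂ) : 0 ≤ frob B := Real.sqrt_nonneg _

lemma l2norm_mulVec_le (B : Matrix (Fin n) (Fin n) ℂ) (x : Fin n → ℂ) :
    l2norm (B *ᵥ x) ≤ frob B * l2norm x := by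
  have h1 : ∀ i, ‖(B *ᵥ x) i‖ ≤ l2norm (fun j => B i j) * l2norm x := by
    intro i
    exact abs_dot_le (fun j => B i j) x
  have h2 : l2norm (B *ᵥ x) ^ 2 ≤ (frob B * l2norm x) ^ 2 := by
    have hs : l2norm (B *ᵥ x) ^ 2 = ∑ i, ‖(B *ᵥ x) i‖ ^ 2 :=
      Real.sq_sqrt (Finset.sum_nonneg fun _ _ => sq_nonneg _)
    rw [hs]
    have hf : (frob B * l2norm x) ^ 2 = ∑ i, (l2norm (fun j => B i j) * l2norm x) ^ 2 := by
      rw [mul_pow, frob, Real.sq_sqrt (Finset.sum_nonneg fun _ _ =>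
        Finset.sum_nonneg fun _ _ => sq_nonneg _), Finset.sum_mul]
      refine Finset.sum_congr rfl fun i _ => ?_
      rw [mul_pow]
      congr 1
      exact (Real.sq_sqrt (Finset.sum_nonneg fun _ _ => sq_nonneg _)).symm
    rw [hf]
    exact Finset.sum_le_sum fun i _ => pow_le_pow_left₀ (norm_nonneg _) (h1 i) 2
  have hnn : 0 ≤ l2norm (B *ᵥ x) := Real.sqrt_nonneg _
  have hnn2 : 0 ≤ frob B * l2norm x := mul_nonneg (frob_nonneg B) (Real.sqrt_nonneg _)
  nlinarith

lemma l2norm_nonneg (v : Fin n → ℂ) : 0 ≤ l2norm v := Real.sqrt_nonneg _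

lemma sq_l2norm (v : Fin n → ℂ) : l2norm v ^ 2 = ∑ j, ‖v j‖ ^ 2 :=
  Real.sq_sqrt (Finset.sum_nonneg fun _ _ => sq_nonneg _)

lemma star_dot_self (v : Fin n → ℂ) :
    dotProduct (star v) v = ((∑ j, ‖v j‖ ^ 2 : ℝ) : ℂ) := by
  push_cast
  simp only [dotProduct, Pi.star_apply]
  refine Finset.sum_congr rfl fun j _ => ?_
  rw [RCLike.star_def, mul_comm, Complex.mul_conj, Complex.normSq_eq_norm_sq]
  push_cast; ring

/-- the squared norm of `M *ᵥ x` as a quadratic form in `Mᴴ * M`. -/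
lemma sq_l2norm_mulVec (M : Matrix (Fin n) (Fin n) ℂ) (x : Fin n → ℂ) :
    ((l2norm (M *ᵥ x) ^ 2 : ℝ) : ℂ) = dotProduct (star x) ((Mᴴ * M) *ᵥ x) := by
  rw [sq_l2norm, ← star_dot_self, Matrix.star_mulVec, ← Matrix.mulVec_mulVec,
    Matrix.dotProduct_mulVec]
  simp [Matrix.dotProduct_mulVec, Matrix.vecMul_vecMul]

lemma sLow_nonneg (M : Matrix (Fin n) (Fin n) ℂ) (m : ℕ) : 0 ≤ sLow M m := by
  unfold sLow
  split
  · exact Real.sqrt_nonneg _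
  · exact le_refl 0

/-- index of the minimal eigenvalue -/
lemma eig_min_le (M : Matrix (Fin n) (Fin n) ℂ) (hn : 0 < n) (i : Fin n) :
    (Matrix.isHermitian_conjTranspose_mul_self M).eigenvalues
      (Tuple.sort ((Matrix.isHermitian_conjTranspose_mul_self M).eigenvalues) ⟨0, hn⟩)
      ≤ (Matrix.isHermitian_conjTranspose_mul_self M).eigenvalues i := by
  set f := (Matrix.isHermitian_conjTranspose_mul_self M).eigenvalues
  have h := Tuple.monotone_sort f
  have : i = Tuple.sort f ((Tuple.sort f).symm i) := (Equiv.apply_symm_apply _ _).symm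
  rw [this]
  exact h (by simp [Fin.le_def])


lemma quad_form_eq (M : Matrix (Fin n) (Fin n) ℂ) (x : Fin n → ℂ) :
    ∃ y : Fin n → ℂ, (∑ j, ‖y j‖ ^ 2 = ∑ j, ‖x j‖ ^ 2) ∧
      dotProduct (star x) ((Mᴴ * M) *ᵥ x)
        = ((∑ i, (Matrix.isHermitian_conjTranspose_mul_self M).eigenvalues i
            * ‖y i‖ ^ 2 : ℝ) : ℂ) := by
  set hH := Matrix.isHermitian_conjTranspose_mul_self M with hHdef
  set U := (hH.eigenvectorUnitary : Matrix (Fin n) (Fin n) ℂ) with hU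
  have hUU : U * star U = 1 := (Matrix.mem_unitaryGroup_iff).mp hH.eigenvectorUnitary.2
  refine ⟨star U *ᵥ x, ?_, ?_⟩
  · have h1 : dotProduct (star (star U *ᵥ x)) (star U *ᵥ x)
        = dotProduct (star x) x := by
      rw [Matrix.star_mulVec, Matrix.star_eq_conjTranspose, Matrix.conjTranspose_conjTranspose,
        ← Matrix.dotProduct_mulVec, Matrix.mulVec_mulVec, ← Matrix.star_eq_conjTranspose, hUU,
        Matrix.one_mulVec]
    have h2 := star_dot_self (star U *ᵥ x)
    have h3 := star_dot_self x
    rw [h2, h3] at h1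
    exact_mod_cast h1
  · have hspec := hH.spectral_theorem
    rw [Unitary.conjStarAlgAut_apply] at hspec
    nth_rewrite 1 [hspec]
    rw [← Matrix.mulVec_mulVec, ← Matrix.mulVec_mulVec, Matrix.dotProduct_mulVec]
    have hsy : star x ᵥ* U = star (star U *ᵥ x) := by
      rw [Matrix.star_mulVec, Matrix.star_eq_conjTranspose, Matrix.conjTranspose_conjTranspose]
    rw [hsy]
    set y := star U *ᵥ x
    push_cast
    simp only [dotProduct, Matrix.mulVec_diagonal, Pi.star_apply, Function.comp_apply]
    refine Finset.sum_congr rfl fun j _ => ?_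
    simp only [RCLike.star_def, RCLike.ofReal_alg]
    rw [show ((starRingEnd ℂ) (y j) * (hH.eigenvalues j • (1:ℂ) * y j))
        = hH.eigenvalues j • (1:ℂ) * (y j * (starRingEnd ℂ) (y j)) by ring,
      Complex.mul_conj, Complex.normSq_eq_norm_sq]
    rw [Complex.real_smul]; push_cast; ring

lemma sLow_eq_sqrt (M : Matrix (Fin n) (Fin n) ℂ) (hn : 0 < n) :
    sLow M 0 = Real.sqrt ((Matrix.isHermitian_conjTranspose_mul_self M).eigenvalues
      (Tuple.sort ((Matrix.isHermitian_conjTranspose_mul_self M).eigenvalues) ⟨0, hn⟩)) := by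
  rw [sLow, dif_pos hn]; rfl

lemma sLow_mul_le (M : Matrix (Fin n) (Fin n) ℂ) (x : Fin n → ℂ) :
    sLow M 0 * l2norm x ≤ l2norm (M *ᵥ x) := by
  rcases Nat.eq_zero_or_pos n with h0 | hn
  · subst h0
    rw [sLow, dif_neg (by omega)]
    simpa using l2norm_nonneg (M *ᵥ x)
  set hH := Matrix.isHermitian_conjTranspose_mul_self M with hHdef
  set lmin := hH.eigenvalues (Tuple.sort hH.eigenvalues ⟨0, hn⟩) with hlmin
  have hlm0 : 0 ≤ lmin := (Matrix.posSemidef_conjTranspose_mul_self M).eigenvalues_nonneg _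
  obtain ⟨y, hy1, hy2⟩ := quad_form_eq M x
  have key : lmin * l2norm x ^ 2 ≤ l2norm (M *ᵥ x) ^ 2 := by
    have h := sq_l2norm_mulVec M x
    rw [hy2] at h
    have h' : l2norm (M *ᵥ x) ^ 2 = ∑ i, hH.eigenvalues i * ‖y i‖ ^ 2 :=
      Complex.ofReal_inj.mp h
    rw [h', sq_l2norm, ← hy1, Finset.mul_sum]
    refine Finset.sum_le_sum fun i _ => ?_
    exact mul_le_mul_of_nonneg_right (eig_min_le M hn i) (sq_nonneg _)
  rw [sLow_eq_sqrt M hn, ← hHdef, ← hlmin]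
  have heq : Real.sqrt lmin * l2norm x = Real.sqrt (lmin * l2norm x ^ 2) := by
    rw [Real.sqrt_mul hlm0, Real.sqrt_sq (l2norm_nonneg x)]
  rw [heq]
  calc Real.sqrt (lmin * l2norm x ^ 2) ≤ Real.sqrt (l2norm (M *ᵥ x) ^ 2) :=
        Real.sqrt_le_sqrt key
    _ = l2norm (M *ᵥ x) := Real.sqrt_sq (l2norm_nonneg _)

lemma exists_unit_min (M : Matrix (Fin n) (Fin n) ℂ) (hn : 0 < n) :
    ∃ x : Fin n → ℂ, l2norm x = 1 ∧ l2norm (M *ᵥ x) = sLow M 0 := by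
  set hH := Matrix.isHermitian_conjTranspose_mul_self M with hHdef
  set i₀ := Tuple.sort hH.eigenvalues ⟨0, hn⟩ with hi₀
  set lmin := hH.eigenvalues i₀ with hlmin
  have hlm0 : 0 ≤ lmin := (Matrix.posSemidef_conjTranspose_mul_self M).eigenvalues_nonneg _
  set x : Fin n → ℂ := ⇑(hH.eigenvectorBasis i₀) with hx
  have h1 : l2norm x = 1 := by
    have hnorm : ‖hH.eigenvectorBasis i₀‖ = 1 := hH.eigenvectorBasis.orthonormal.1 i₀
    rw [EuclideanSpace.norm_eq] at hnorm
    rw [l2norm]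
    simpa using hnorm
  refine ⟨x, h1, ?_⟩
  have h2 := sq_l2norm_mulVec M x
  have hmv : (Mᴴ * M) *ᵥ x = lmin • x := by
    rw [hx]; exact hH.mulVec_eigenvectorBasis i₀
  rw [hmv] at h2
  have h4 : (∑ j, ‖x j‖ ^ 2 : ℝ) = 1 := by
    have := sq_l2norm x
    rw [h1] at this; simpa using this.symm
  have h3 : dotProduct (star x) (lmin • x) = (lmin : ℂ) := by
    rw [dotProduct_smul, star_dot_self, h4]
    simp [Complex.real_smul]
  rw [h3] at h2
  have h5 : l2norm (M *ᵥ x) ^ 2 = lmin := Complex.ofReal_inj.mp h2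
  rw [sLow_eq_sqrt M hn, ← hHdef, ← hi₀, ← hlmin, ← h5, Real.sqrt_sq (l2norm_nonneg _)]

end Helpers


section Cont
variable {n : ℕ}

lemma sLow_diff_le (M N : Matrix (Fin n) (Fin n) ℂ) :
    sLow N 0 ≤ sLow M 0 + frob (N - M) := by
  rcases Nat.eq_zero_or_pos n with h0 | hn
  · subst h0
    rw [sLow, dif_neg (by omega), sLow, dif_neg (by omega)]
    simpa using frob_nonneg (N - M)
  obtain ⟨x, hx1, hx2⟩ := exists_unit_min M hn
  have h1 : sLow N 0 ≤ l2norm (N *ᵥ x) := by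
    have := sLow_mul_le N x
    rwa [hx1, mul_one] at this
  have h2 : N *ᵥ x = M *ᵥ x + (N - M) *ᵥ x := by
    rw [Matrix.sub_mulVec]; ring_nf
  calc sLow N 0 ≤ l2norm (N *ᵥ x) := h1
    _ ≤ l2norm (M *ᵥ x) + l2norm ((N - M) *ᵥ x) := by rw [h2]; exact l2norm_add_le _ _
    _ ≤ sLow M 0 + frob (N - M) * l2norm x := by
        gcongr
        · rw [hx2]
        · exact l2norm_mulVec_le _ _
    _ = sLow M 0 + frob (N - M) := by rw [hx1, mul_one]

lemma continuous_frob : Continuous fun B : Matrix (Fin n) (Fin n) ℂ => frob B := by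
  unfold frob
  apply Real.continuous_sqrt.comp
  apply continuous_finset_sum
  intro i _
  apply continuous_finset_sum
  intro j _
  have hentry : Continuous fun B : Matrix (Fin n) (Fin n) ℂ => B i j :=
    (continuous_apply j).comp (continuous_apply i)
  exact (continuous_norm.comp hentry).pow 2

lemma continuous_sLow : Continuous fun B : Matrix (Fin n) (Fin n) ℂ => sLow B 0 := by
  rw [continuous_iff_continuousAt]
  intro M
  have habs : ∀ N, |sLow N 0 - sLow M 0| ≤ frob (N - M) + frob (M - N) := by
    intro N
    rw [abs_le]
    constructor
    · have := sLow_diff_le N M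
      have h2 := frob_nonneg (N - M)
      linarith
    · have := sLow_diff_le M N
      have h2 := frob_nonneg (M - N)
      linarith
  have hg : Filter.Tendsto (fun N => frob (N - M) + frob (M - N)) (nhds M) (nhds 0) := by
    have hc : Continuous fun N : Matrix (Fin n) (Fin n) ℂ => frob (N - M) + frob (M - N) := by
      exact (continuous_frob.comp (continuous_id.sub continuous_const)).add
        (continuous_frob.comp (continuous_const.sub continuous_id))
    have := hc.continuousAt (x := M)
    simpa [frob, ContinuousAt] using this
  have hf : Filter.Tendsto (fun N => sLow N 0 - sLow M 0) (nhds M) (nhds 0) := by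
    rw [tendsto_zero_iff_abs_tendsto_zero]
    exact squeeze_zero (fun _ => abs_nonneg _) habs hg
  have := hf.add_const (sLow M 0)
  simpa [ContinuousAt] using this

lemma measurable_vol_pspec (ε : ℝ) :
    Measurable fun B : Matrix (Fin n) (Fin n) ℂ => MeasureTheory.volume (pspec ε B) := by
  haveI : BorelSpace (Matrix (Fin n) (Fin n) ℂ) :=
    inferInstanceAs (BorelSpace (Fin n → Fin n → ℂ))
  have hS : MeasurableSet {p : Matrix (Fin n) (Fin n) ℂ × ℂ |
      sLow (p.2 • (1 : Matrix (Fin n) (Fin n) ℂ) - p.1) 0 ≤ ε} := by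
    have hcont : Continuous fun p : Matrix (Fin n) (Fin n) ℂ × ℂ =>
        sLow (p.2 • (1 : Matrix (Fin n) (Fin n) ℂ) - p.1) 0 := by
      apply continuous_sLow.comp
      exact (continuous_snd.smul continuous_const).sub continuous_fst
    exact measurableSet_le hcont.measurable measurable_const
  have := measurable_measure_prodMk_left (ν := MeasureTheory.volume) hS
  exact this

end Cont
section Disk
variable {n : ℕ}

lemma l2norm_star (a : Fin n → ℂ) : l2norm (star a) = l2norm a := by
  unfold l2norm
  congr 1
  exact Finset.sum_congr rfl fun j _ => by simp

lemma l2norm_neg (a : Fin n → ℂ) : l2norm (-a) = l2norm a := by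
  rw [l2norm_eq_norm, l2norm_eq_norm, map_neg, norm_neg]

lemma l2norm_pos {v : Fin n → ℂ} (hv : v ≠ 0) : 0 < l2norm v := by
  rw [l2norm_eq_norm]
  rw [norm_pos_iff]
  intro h
  exact hv (by simpa using congrArg E2.symm h)

lemma mulVec_eq_sum_smul_col (V : Matrix (Fin n) (Fin n) ℂ) (y : Fin n → ℂ) :
    V *ᵥ y = ∑ i, y i • (fun k => V k i) := by
  funext k
  simp only [Matrix.mulVec, dotProduct, Finset.sum_apply, Pi.smul_apply, smul_eq_mul]
  exact Finset.sum_congr rfl fun i _ => mul_comm _ _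

set_option maxHeartbeats 1000000 in
lemma disk_lemma (V : Matrix (Fin n) (Fin n) ℂ) (lam : Fin n → ℂ) (hV : IsUnit V)
    (τ₁ τ₂ ε η₀ : ℝ) (hτ₁ : 0 < τ₁) (hε : 0 < ε)
    (hcond : (n : ℝ) * ε * Real.sqrt τ₂ ≤ η₀)
    (hκ₂ : ∀ i, evCond V i ≤ Real.sqrt τ₂) (j : Fin n)
    (hκj : Real.sqrt τ₁ < evCond V j)
    (hgap : ∀ i, i ≠ j → η₀ ≤ ‖lam i - lam j‖)
    (z : ℂ) (hz0 : z ≠ lam j)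
    (hzr : ‖z - lam j‖ < ε * Real.sqrt τ₁ / 2) :
    sLow (z • (1 : Matrix (Fin n) (Fin n) ℂ) - (V * Matrix.diagonal lam * V⁻¹)) 0 ≤ ε := by
  have hdetV : IsUnit V.det := (Matrix.isUnit_iff_isUnit_det V).mp hV
  have hVV : V * V⁻¹ = 1 := Matrix.mul_nonsing_inv V hdetV
  have hVV' : V⁻¹ * V = 1 := Matrix.nonsing_inv_mul V hdetV
  set M := z • (1 : Matrix (Fin n) (Fin n) ℂ) - (V * Matrix.diagonal lam * V⁻¹) with hM
  -- basic positivity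
  have hst1 : 0 < Real.sqrt τ₁ := Real.sqrt_pos.mpr hτ₁
  have hr : 0 < ε * Real.sqrt τ₁ / 2 := by positivity
  set r := ε * Real.sqrt τ₁ / 2 with hrdef
  have hst2 : 0 < Real.sqrt τ₂ := lt_trans hst1 (lt_of_lt_of_le hκj (hκ₂ j))
  have hn1 : (1 : ℝ) ≤ (n : ℝ) := by
    have := j.pos
    exact_mod_cast this
  set s := ε * Real.sqrt τ₂ with hsdef
  have hs : 0 < s := by positivity
  have hns : (n : ℝ) * s ≤ η₀ := by rw [hsdef]; linarith [hcond]
  have hrs : r ≤ s / 2 := by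
    rw [hrdef, hsdef]
    have : Real.sqrt τ₁ ≤ Real.sqrt τ₂ := le_of_lt (lt_of_lt_of_le hκj (hκ₂ j))
    nlinarith
  have hη₀ : s ≤ η₀ := by nlinarith
  -- distances
  set dzj := ‖z - lam j‖ with hdzj
  have hdzj0 : 0 < dzj := by
    rw [hdzj]
    exact norm_pos_iff.mpr (sub_ne_zero.mpr hz0)
  have hdz : ∀ i, i ≠ j → η₀ - r ≤ ‖z - lam i‖ := by
    intro i hij
    have h1 := hgap i hij
    have h2 : ‖lam i - lam j‖ ≤ ‖lam i - z‖ + ‖z - lam j‖ :=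
      norm_sub_le_norm_sub_add_norm_sub _ _ _
    have h3 : ‖lam i - z‖ = ‖z - lam i‖ := norm_sub_rev _ _
    rw [h3] at h2
    have h4 := le_of_lt hzr
    linarith
  have hηr : 0 < η₀ - r := by nlinarith
  have hzne : ∀ i, z ≠ lam i := by
    intro i
    by_cases hij : i = j
    · rw [hij]; exact hz0
    · intro h
      have := hdz i hij
      rw [← h] at this
      simp at this
      linarith
  -- row norm positive
  set wnorm : Fin n → ℝ := fun i => l2norm (fun k => V⁻¹ i k) with hwnorm
  set vnorm : Fin n → ℝ := fun i => l2norm (fun k => V k i) with hvnorm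
  have hwj : 0 < wnorm j := by
    apply l2norm_pos
    intro h
    have h1 : (V⁻¹ * V) j j = 1 := by rw [hVV']; simp
    have h2 : (V⁻¹ * V) j j = ∑ k, V⁻¹ j k * V k j := by
      simp [Matrix.mul_apply]
    have h3 : ∀ k, V⁻¹ j k = 0 := fun k => congrFun h k
    rw [h2] at h1
    simp only [h3, zero_mul, Finset.sum_const_zero] at h1
    exact zero_ne_one h1
  -- test vector x
  set x : Fin n → ℂ := ((wnorm j : ℂ))⁻¹ • star (fun k => V⁻¹ j k) with hx
  have hwjC : (wnorm j : ℂ) ≠ 0 := by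
    simp only [ne_eq, Complex.ofReal_eq_zero]
    exact ne_of_gt hwj
  have hx1 : l2norm x = 1 := by
    rw [hx, l2norm_smul, l2norm_star]
    rw [norm_inv, Complex.norm_real, Real.norm_eq_abs, abs_of_pos hwj]
    show (wnorm j)⁻¹ * wnorm j = 1
    exact inv_mul_cancel₀ (ne_of_gt hwj)
  have hdot : (V⁻¹ *ᵥ x) j = (wnorm j : ℂ) := by
    show dotProduct (fun k => V⁻¹ j k) x = _
    rw [hx]
    simp only [dotProduct, Pi.smul_apply, Pi.star_apply, smul_eq_mul]
    have : ∀ k, V⁻¹ j k * ((wnorm j : ℂ))⁻¹ * star (V⁻¹ j k)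
        = ((wnorm j : ℂ))⁻¹ * (‖V⁻¹ j k‖ ^ 2 : ℝ) := by
      intro k
      rw [RCLike.star_def]
      rw [show V⁻¹ j k * ((wnorm j : ℂ))⁻¹ * (starRingEnd ℂ) (V⁻¹ j k)
          = ((wnorm j : ℂ))⁻¹ * (V⁻¹ j k * (starRingEnd ℂ) (V⁻¹ j k)) by ring]
      rw [Complex.mul_conj, Complex.normSq_eq_norm_sq]
    calc (∑ k, V⁻¹ j k * (((wnorm j : ℂ))⁻¹ * star (V⁻¹ j k)))
        = ∑ k, ((wnorm j : ℂ))⁻¹ * (‖V⁻¹ j k‖ ^ 2 : ℝ) := by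
          refine Finset.sum_congr rfl fun k _ => ?_
          rw [← mul_assoc, this k]
      _ = ((wnorm j : ℂ))⁻¹ * ((∑ k, ‖V⁻¹ j k‖ ^ 2 : ℝ) : ℂ) := by
          rw [← Finset.mul_sum]; push_cast; ring
      _ = (wnorm j : ℂ) := by
          have hsq : (∑ k, ‖V⁻¹ j k‖ ^ 2 : ℝ) = wnorm j ^ 2 := (sq_l2norm _).symm
          rw [hsq]
          push_cast
          field_simp
  -- the vector y and u
  set y : Fin n → ℂ := fun i => (V⁻¹ *ᵥ x) i / (z - lam i) with hy
  set u := V *ᵥ y with hu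
  have hMu : M *ᵥ u = x := by
    have h5 : (V * Matrix.diagonal lam * V⁻¹) *ᵥ u = V *ᵥ (Matrix.diagonal lam *ᵥ y) := by
      rw [hu, Matrix.mulVec_mulVec, mul_assoc (V * Matrix.diagonal lam) V⁻¹ V, hVV', mul_one,
        ← Matrix.mulVec_mulVec]
    have h6 : M *ᵥ u = z • u - (V * Matrix.diagonal lam * V⁻¹) *ᵥ u := by
      rw [hM, Matrix.sub_mulVec, Matrix.smul_mulVec, Matrix.one_mulVec]
    have h7 : z • y - Matrix.diagonal lam *ᵥ y = V⁻¹ *ᵥ x := by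
      funext i
      simp only [Pi.sub_apply, Pi.smul_apply, Matrix.mulVec_diagonal, smul_eq_mul, hy]
      field_simp [sub_ne_zero.mpr (hzne i)]
    rw [h6, h5, hu, ← Matrix.mulVec_smul, ← Matrix.mulVec_sub, h7, Matrix.mulVec_mulVec, hVV,
      Matrix.one_mulVec]
  -- decomposition of u and norm lower bound
  have hdecomp : u = y j • (fun k => V k j) + ∑ i ∈ Finset.univ.erase j, y i • (fun k => V k i) := by
    rw [hu, mulVec_eq_sum_smul_col, ← Finset.add_sum_erase _ _ (Finset.mem_univ j)]
  have hκdef : evCond V j = vnorm j * wnorm j := rfl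
  have hyj : ‖y j‖ = wnorm j / dzj := by
    show ‖(V⁻¹ *ᵥ x) j / (z - lam j)‖ = _
    rw [hdot, norm_div, Complex.norm_real, Real.norm_eq_abs, abs_of_pos hwj]
  have hterm_j : l2norm (y j • (fun k => V k j)) = evCond V j / dzj := by
    rw [l2norm_smul, hyj, hκdef]
    show wnorm j / dzj * vnorm j = vnorm j * wnorm j / dzj
    ring
  have hterm_i : ∀ i, i ≠ j →
      l2norm (y i • (fun k => V k i)) ≤ Real.sqrt τ₂ / (η₀ - r) := by
    intro i hij
    rw [l2norm_smul]
    have hpos : 0 < ‖z - lam i‖ := norm_pos_iff.mpr (sub_ne_zero.mpr (hzne i))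
    have h1 : ‖(V⁻¹ *ᵥ x) i‖ ≤ wnorm i := by
      have h := abs_dot_le (fun k => V⁻¹ i k) x
      rw [hx1, mul_one] at h
      exact h
    have h2 : ‖y i‖ ≤ wnorm i / ‖z - lam i‖ := by
      show ‖(V⁻¹ *ᵥ x) i / (z - lam i)‖ ≤ _
      rw [norm_div]
      gcongr
    have hv0 : 0 ≤ vnorm i := l2norm_nonneg _
    have h3 : ‖y i‖ * vnorm i ≤ wnorm i / ‖z - lam i‖ * vnorm i :=
      mul_le_mul_of_nonneg_right h2 hv0
    refine h3.trans ?_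
    have h4 : wnorm i / ‖z - lam i‖ * vnorm i
        = (vnorm i * wnorm i) / ‖z - lam i‖ := by ring
    rw [h4]
    have h5 : vnorm i * wnorm i ≤ Real.sqrt τ₂ := hκ₂ i
    have h6 := hdz i hij
    exact div_le_div₀ hst2.le h5 hηr h6
  have hsum : l2norm (∑ i ∈ Finset.univ.erase j, y i • (fun k => V k i))
      ≤ ((n : ℝ) - 1) * (Real.sqrt τ₂ / (η₀ - r)) := by
    refine (l2norm_sum_le _ _).trans ?_
    have hcard : (Finset.univ.erase j).card = n - 1 := by
      rw [Finset.card_erase_of_mem (Finset.mem_univ j), Finset.card_univ, Fintype.card_fin]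
    have hb := Finset.sum_le_card_nsmul (Finset.univ.erase j)
      (fun i => l2norm (y i • (fun k => V k i))) (Real.sqrt τ₂ / (η₀ - r))
      (fun i hi => hterm_i i (Finset.ne_of_mem_erase hi))
    rw [hcard] at hb
    refine hb.trans ?_
    rw [nsmul_eq_mul]
    have hn : 1 ≤ n := j.pos
    rw [Nat.cast_sub hn, Nat.cast_one]
  have hκj_dzj : 2 / ε < evCond V j / dzj := by
    have h1 : Real.sqrt τ₁ / r < evCond V j / dzj :=
      div_lt_div₀ hκj (le_of_lt hzr) (lt_trans hst1 hκj).le hdzj0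
    have h2 : Real.sqrt τ₁ / r = 2 / ε := by
      rw [hrdef]
      field_simp
    linarith
  have hsum_le : ((n : ℝ) - 1) * (Real.sqrt τ₂ / (η₀ - r)) ≤ 1 / ε := by
    rw [mul_div_assoc']
    rw [div_le_div_iff₀ hηr hε]
    nlinarith [hns, hrs, hs]
  have hmain : evCond V j / dzj
      ≤ l2norm u + ((n : ℝ) - 1) * (Real.sqrt τ₂ / (η₀ - r)) := by
    have ha : y j • (fun k => V k j)
        = u - ∑ i ∈ Finset.univ.erase j, y i • (fun k => V k i) := by
      rw [hdecomp]; abel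
    have hb : l2norm (y j • (fun k => V k j))
        ≤ l2norm u + l2norm (∑ i ∈ Finset.univ.erase j, y i • (fun k => V k i)) := by
      rw [ha, sub_eq_add_neg]
      refine (l2norm_add_le _ _).trans ?_
      rw [l2norm_neg]
    rw [hterm_j] at hb
    linarith [hsum]
  have hu_lb : 1 / ε < l2norm u := by
    have htw : 2 / ε - 1 / ε = 1 / ε := by ring
    linarith
  have hfin := sLow_mul_le M u
  rw [hMu, hx1] at hfin
  have hL0 : 0 < l2norm u := lt_trans (by positivity) hu_lb
  have h1 : 1 < ε * l2norm u := by
    rw [div_lt_iff₀ hε] at hu_lb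
    linarith
  by_contra hcon
  push_neg at hcon
  have h2 : ε * l2norm u < sLow M 0 * l2norm u := mul_lt_mul_of_pos_right hcon hL0
  linarith
end Disk
section Event
variable {n : ℕ}

lemma vol_pspec_ge (B : Matrix (Fin n) (Fin n) ℂ) (τ₁ τ₂ ε η₀ : ℝ)
    (hτ₁ : 0 < τ₁) (hε : 0 < ε) (hη₀ : 0 < η₀)
    (hcond : (n : ℝ) * ε * Real.sqrt τ₂ ≤ η₀)
    (h2 : distinctCondEvent τ₂ B) (h1 : ¬ distinctCondEvent τ₁ B)
    (hgap : η₀ ≤ minGap B) :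
    ENNReal.ofReal (Real.pi * (ε ^ 2 * τ₁) / 4) ≤ MeasureTheory.volume (pspec ε B) := by
  obtain ⟨V, lam, hinj, hV, hB, hκ⟩ := h2
  -- some j has large condition number
  have hj : ∃ j, τ₁ < evCond V j ^ 2 := by
    by_contra hc
    push_neg at hc
    exact h1 ⟨V, lam, hinj, hV, hB, hc⟩
  obtain ⟨j, hj⟩ := hj
  have hκ0 : 0 ≤ evCond V j := mul_nonneg (l2norm_nonneg _) (l2norm_nonneg _)
  have hκpos : 0 < evCond V j := by nlinarith
  have hκj : Real.sqrt τ₁ < evCond V j := (Real.sqrt_lt' hκpos).mpr hj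
  have hκ₂ : ∀ i, evCond V i ≤ Real.sqrt τ₂ := by
    intro i
    have h := hκ i
    have h0 : 0 ≤ evCond V i := mul_nonneg (l2norm_nonneg _) (l2norm_nonneg _)
    calc evCond V i = Real.sqrt (evCond V i ^ 2) := (Real.sqrt_sq h0).symm
      _ ≤ Real.sqrt τ₂ := Real.sqrt_le_sqrt h
  -- eigenvalue gaps
  have hroots : B.charpoly.roots = Multiset.map lam Finset.univ.val := by
    rw [hB, charpoly_conj_diag V lam hV, roots_charpoly_diag]
  have hgap' : ∀ i, i ≠ j → η₀ ≤ ‖lam i - lam j‖ := by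
    intro i hij
    have hmem1 : lam i ∈ B.charpoly.roots := by
      rw [hroots]; exact Multiset.mem_map_of_mem lam (Finset.mem_univ_val i)
    have hmem2 : lam j ∈ B.charpoly.roots.erase (lam i) := by
      rw [Multiset.mem_erase_of_ne (show lam j ≠ lam i from fun h => hij (hinj h).symm)]
      rw [hroots]; exact Multiset.mem_map_of_mem lam (Finset.mem_univ_val j)
    have hmemS : ‖lam i - lam j‖ ∈
        {d | ∃ a ∈ B.charpoly.roots, ∃ b ∈ B.charpoly.roots.erase a,
          d = ‖a - b‖} := ⟨lam i, hmem1, lam j, hmem2, rfl⟩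
    have hbdd : BddBelow {d | ∃ a ∈ B.charpoly.roots, ∃ b ∈ B.charpoly.roots.erase a,
        d = ‖a - b‖} := by
      refine ⟨0, fun d hd => ?_⟩
      obtain ⟨a, _, b, _, rfl⟩ := hd
      exact norm_nonneg _
    calc η₀ ≤ minGap B := hgap
      _ ≤ ‖lam i - lam j‖ := csInf_le hbdd hmemS
  -- the punctured ball is inside the pseudospectrum
  set r := ε * Real.sqrt τ₁ / 2 with hrdef
  have hrpos : 0 < r := by
    have := Real.sqrt_pos.mpr hτ₁
    positivity
  have hsub : Metric.ball (lam j) r \ {lam j} ⊆ pspec ε B := by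
    intro z hz
    obtain ⟨hz1, hz2⟩ := hz
    have hz0 : z ≠ lam j := hz2
    have hzr : ‖z - lam j‖ < r := by
      rw [Metric.mem_ball, Complex.dist_eq] at hz1
      exact hz1
    show sLow (z • (1 : Matrix (Fin n) (Fin n) ℂ) - B) 0 ≤ ε
    rw [hB]
    exact disk_lemma V lam hV τ₁ τ₂ ε η₀ hτ₁ hε hcond hκ₂ j hκj hgap' z hz0 hzr
  -- volume bound
  have hvol : MeasureTheory.volume (Metric.ball (lam j) r \ {lam j})
      = ENNReal.ofReal (Real.pi * (ε ^ 2 * τ₁) / 4) := by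
    rw [MeasureTheory.measure_diff_null]
    · rw [Complex.volume_ball, ← ENNReal.ofReal_pow hrpos.le]
      have h1 : ((NNReal.pi : NNReal) : ENNReal) = ENNReal.ofReal Real.pi := by
        rw [← NNReal.coe_real_pi, ENNReal.ofReal_coe_nnreal]
      rw [h1, ← ENNReal.ofReal_mul (by positivity)]
      congr 1
      rw [hrdef]
      rw [div_pow, mul_pow, Real.sq_sqrt hτ₁.le]
      ring
    · have := Complex.volume_closedBall (lam j) 0
      rw [Metric.closedBall_zero] at this
      rw [this]
      simp
  rw [← hvol]
  exact MeasureTheory.measure_mono hsub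
end Event

/-- a single bootstrap tug. -/
theorem bootstrap_tug {Ω : Type*} [MeasurableSpace Ω] (μ : Measure Ω)
    [IsProbabilityMeasure μ] {n : ℕ} (A : Ω → Matrix (Fin n) (Fin n) ℂ)
    (hA : Measurable A) (τ₁ τ₂ ε η₀ : ℝ)
    (hτ₁ : 0 < τ₁) (hτ : τ₁ < τ₂) (hε : 0 < ε) (hη₀ : 0 < η₀)
    (hcond : (n : ℝ) * ε * Real.sqrt τ₂ ≤ η₀) :
    μ {ω | distinctCondEvent τ₂ (A ω) ∧ η₀ ≤ minGap (A ω)}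
      ≤ μ {ω | distinctCondEvent τ₁ (A ω) ∧ η₀ ≤ minGap (A ω)}
        + ENNReal.ofReal (4 / Real.pi)
            * (∫⁻ ω, MeasureTheory.volume (pspec ε (A ω)) ∂μ)
            / ENNReal.ofReal (ε ^ 2 * τ₁) := by
  classical
  set c : ℝ≥0∞ := ENNReal.ofReal (Real.pi * (ε ^ 2 * τ₁) / 4) with hc
  set I : ℝ≥0∞ := ∫⁻ ω, MeasureTheory.volume (pspec ε (A ω)) ∂μ with hI
  set T : Set Ω := {ω | c ≤ MeasureTheory.volume (pspec ε (A ω))} with hT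
  have hπ := Real.pi_pos
  have hsub : {ω | distinctCondEvent τ₂ (A ω) ∧ η₀ ≤ minGap (A ω)}
      ⊆ {ω | distinctCondEvent τ₁ (A ω) ∧ η₀ ≤ minGap (A ω)} ∪ T := by
    intro ω hω
    obtain ⟨h2, hg⟩ := hω
    by_cases h1 : distinctCondEvent τ₁ (A ω)
    · exact Or.inl ⟨h1, hg⟩
    · exact Or.inr (vol_pspec_ge (A ω) τ₁ τ₂ ε η₀ hτ₁ hε hη₀ hcond h2 h1 hg)
  have hmeas : AEMeasurable (fun ω => MeasureTheory.volume (pspec ε (A ω))) μ :=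
    ((measurable_vol_pspec ε).comp hA).aemeasurable
  have hc0 : c ≠ 0 := by
    rw [hc]
    simp only [ne_eq, ENNReal.ofReal_eq_zero, not_le]
    positivity
  have hcT : μ T ≤ I / c :=
    MeasureTheory.meas_ge_le_lintegral_div hmeas hc0 ENNReal.ofReal_ne_top
  have key : μ {ω | distinctCondEvent τ₂ (A ω) ∧ η₀ ≤ minGap (A ω)}
      ≤ μ {ω | distinctCondEvent τ₁ (A ω) ∧ η₀ ≤ minGap (A ω)} + μ T :=
    (measure_mono hsub).trans (measure_union_le _ _)
  refine key.trans ?_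
  have hq : (0:ℝ) < ε ^ 2 * τ₁ := by positivity
  have harith : c⁻¹ = ENNReal.ofReal (4 / Real.pi) * (ENNReal.ofReal (ε ^ 2 * τ₁))⁻¹ := by
    rw [hc, ← ENNReal.ofReal_inv_of_pos (by positivity), ← ENNReal.ofReal_inv_of_pos hq,
      ← ENNReal.ofReal_mul (by positivity)]
    congr 1
    field_simp
  calc μ {ω | distinctCondEvent τ₁ (A ω) ∧ η₀ ≤ minGap (A ω)} + μ T
      ≤ μ {ω | distinctCondEvent τ₁ (A ω) ∧ η₀ ≤ minGap (A ω)} + I / c :=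
        add_le_add_right hcT _
    _ = μ {ω | distinctCondEvent τ₁ (A ω) ∧ η₀ ≤ minGap (A ω)}
        + ENNReal.ofReal (4 / Real.pi) * I / ENNReal.ofReal (ε ^ 2 * τ₁) := by
        congr 1
        rw [div_eq_mul_inv, harith]
        rw [div_eq_mul_inv (ENNReal.ofReal (4 / Real.pi) * I)]
        ring

end
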